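/- For every real t > 0, the function A(t) = ∫_{Δ₁} dx dp/(2 x^{1/2}(1−x)^{1/2}(x+2t)^{1/2} p^{3/4}(1−p)^{1/2}) is differentiable at t, and its derivative is obtained by differentiating under the integral sign: A′(t) = ∫_{Δ₁} (−1)/(2 x^{1/2}(1−x)^{1/2}(x+2t)^{3/2} p^{3/4}(1−p)^{1/2}) dx dp. -/

import Mathlib

open MeasureTheory Set

/-- The region `Δ₁ = {(x,p) : 0 < x < 1, 0 < p ≤ (x/(2−x))²}`. -/
def Delta1 : Set (ℝ × ℝ) :=
  {z | 0 < z.1 ∧ z.1 < 1 ∧ 0 < z.2 ∧ z.2 ≤ (z.1 / (2 - z.1)) ^ 2}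

lemma measurableSet_Delta1 : MeasurableSet Delta1 := by
  have h1 : Delta1 = {z : ℝ × ℝ | 0 < z.1} ∩ ({z | z.1 < 1} ∩
      ({z | 0 < z.2} ∩ {z | z.2 ≤ (z.1 / (2 - z.1)) ^ 2})) := by
    ext z; simp [Delta1, and_assoc]
  rw [h1]
  refine (measurableSet_lt measurable_const measurable_fst).inter
    ((measurableSet_lt measurable_fst measurable_const).inter
    ((measurableSet_lt measurable_const measurable_snd).inter
      (measurableSet_le measurable_snd (by fun_prop))))

lemma Delta1_subset : Delta1 ⊆ Ioo (0:ℝ) 1 ×ˢ Ioo (0:ℝ) 1 := by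
  rintro ⟨x, p⟩ ⟨hx0, hx1, hp0, hpq⟩
  refine ⟨⟨hx0, hx1⟩, hp0, ?_⟩
  have h2x : (0:ℝ) < 2 - x := by linarith
  have : (x / (2 - x)) ^ 2 < 1 := by
    rw [div_pow, div_lt_one (by positivity)]; nlinarith
  linarith

lemma betaInt {a b : ℝ} (ha : -1 < a) (ha0 : a ≤ 0) (hb : -1 < b) (hb0 : b ≤ 0) :
    IntegrableOn (fun x : ℝ => x ^ a * (1 - x) ^ b) (Ioo 0 1) := by
  have hmeas : Measurable fun x : ℝ => x ^ a * (1 - x) ^ b := by fun_prop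
  have key : ∀ c : ℝ, -1 < c → IntegrableOn (fun x : ℝ => x ^ c) (Ioc 0 (1/2 : ℝ)) := by
    intro c hc
    have h := intervalIntegral.intervalIntegrable_rpow' (a := 0) (b := 1/2) hc
    rwa [intervalIntegrable_iff_integrableOn_Ioc_of_le (by norm_num)] at h
  have htwo : ∀ c : ℝ, -1 < c → c ≤ 0 → ∀ x : ℝ, 1/2 ≤ x → 0 < x → x ^ c ≤ 2 := by
    intro c hc hc0 x hx hx0
    calc x ^ c ≤ (1/2 : ℝ) ^ c := Real.rpow_le_rpow_of_nonpos (by norm_num) hx hc0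
    _ = (2 ^ c)⁻¹ := by
        rw [show (1/2 : ℝ) = 2⁻¹ by norm_num, Real.inv_rpow (by norm_num)]
    _ = 2 ^ (-c) := (Real.rpow_neg (by norm_num) c).symm
    _ ≤ 2 ^ (1:ℝ) := Real.rpow_le_rpow_of_exponent_le (by norm_num) (by linarith)
    _ = 2 := Real.rpow_one 2
  have h1 : IntegrableOn (fun x : ℝ => x ^ a * (1 - x) ^ b) (Ioc 0 (1/2 : ℝ)) := by
    refine Integrable.mono' ((key a ha).const_mul 2) hmeas.aestronglyMeasurable ?_
    refine (ae_restrict_iff' measurableSet_Ioc).2 (.of_forall fun x hx => ?_)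
    obtain ⟨hx0, hx2⟩ := hx
    have hxa : (0:ℝ) ≤ x ^ a := Real.rpow_nonneg hx0.le _
    have hxb : (0:ℝ) ≤ (1 - x) ^ b := Real.rpow_nonneg (by linarith) _
    rw [Real.norm_eq_abs, abs_of_nonneg (mul_nonneg hxa hxb)]
    have hb2 : (1 - x) ^ b ≤ 2 := htwo b hb hb0 _ (by linarith) (by linarith)
    calc x ^ a * (1 - x) ^ b ≤ x ^ a * 2 := mul_le_mul_of_nonneg_left hb2 hxa
    _ = 2 * x ^ a := by ring
  have h2 : IntegrableOn (fun x : ℝ => x ^ a * (1 - x) ^ b) (Ioo (1/2 : ℝ) 1) := by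
    have hint : IntegrableOn (fun x : ℝ => (1 - x) ^ b) (Ioo (1/2 : ℝ) 1) := by
      have h := (intervalIntegral.intervalIntegrable_rpow' (a := 0) (b := 1/2) hb).comp_sub_left 1
      norm_num at h
      have h' := h.symm
      rw [intervalIntegrable_iff_integrableOn_Ioc_of_le (by norm_num)] at h'
      exact h'.mono_set Ioo_subset_Ioc_self
    refine Integrable.mono' (hint.const_mul 2) hmeas.aestronglyMeasurable ?_
    refine (ae_restrict_iff' measurableSet_Ioo).2 (.of_forall fun x hx => ?_)
    obtain ⟨hx0, hx1⟩ := hx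
    have hxa : (0:ℝ) ≤ x ^ a := Real.rpow_nonneg (by linarith) _
    have hxb : (0:ℝ) ≤ (1 - x) ^ b := Real.rpow_nonneg (by linarith) _
    rw [Real.norm_eq_abs, abs_of_nonneg (mul_nonneg hxa hxb)]
    have hb2 : x ^ a ≤ 2 := htwo a ha ha0 _ hx0.le (by linarith)
    exact mul_le_mul_of_nonneg_right hb2 hxb
  refine (h1.union h2).mono_set fun x hx => ?_
  rcases le_or_gt x (1/2) with h | h
  · exact Or.inl ⟨hx.1, h⟩
  · exact Or.inr ⟨h, hx.2⟩

lemma g_intOn : IntegrableOn (fun z : ℝ × ℝ =>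
    (z.1 ^ (-(1:ℝ)/2) * (1 - z.1) ^ (-(1:ℝ)/2)) * (z.2 ^ (-(3:ℝ)/4) * (1 - z.2) ^ (-(1:ℝ)/2)))
    Delta1 := by
  refine IntegrableOn.mono_set ?_ Delta1_subset
  have h1 := betaInt (a := -(1:ℝ)/2) (b := -(1:ℝ)/2) (by norm_num) (by norm_num) (by norm_num)
    (by norm_num)
  have h2 := betaInt (a := -(3:ℝ)/4) (b := -(1:ℝ)/2) (by norm_num) (by norm_num) (by norm_num)
    (by norm_num)
  have h := Integrable.mul_prod h1 h2
  rwa [Measure.prod_restrict] at h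

set_option maxHeartbeats 1000000 in
/-- For `t > 0`, the function `A(t) = ∫_{Δ₁} dx dp/(2x^{1/2}(1−x)^{1/2}(x+2t)^{1/2}p^{3/4}(1−p)^{1/2})`
is differentiable at `t` and its derivative is obtained by differentiating under the
integral sign. -/
theorem stmt11 (t : ℝ) (ht : 0 < t) :
    HasDerivAt (fun s : ℝ => ∫ z in Delta1,
        1 / (2 * z.1 ^ ((1:ℝ)/2) * (1 - z.1) ^ ((1:ℝ)/2) * (z.1 + 2 * s) ^ ((1:ℝ)/2) *
          z.2 ^ ((3:ℝ)/4) * (1 - z.2) ^ ((1:ℝ)/2)))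
      (∫ z in Delta1,
        -1 / (2 * z.1 ^ ((1:ℝ)/2) * (1 - z.1) ^ ((1:ℝ)/2) * (z.1 + 2 * t) ^ ((3:ℝ)/2) *
          z.2 ^ ((3:ℝ)/4) * (1 - z.2) ^ ((1:ℝ)/2))) t := by
  have hg := g_intOn
  set g : ℝ × ℝ → ℝ := fun z =>
    (z.1 ^ (-(1:ℝ)/2) * (1 - z.1) ^ (-(1:ℝ)/2)) * (z.2 ^ (-(3:ℝ)/4) * (1 - z.2) ^ (-(1:ℝ)/2))
    with hgdef
  -- facts about points of Delta1
  have hmem : ∀ z ∈ Delta1, 0 < z.1 ∧ z.1 < 1 ∧ 0 < z.2 ∧ z.2 < 1 := fun z hz =>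
    ⟨(Delta1_subset hz).1.1, (Delta1_subset hz).1.2, (Delta1_subset hz).2.1,
      (Delta1_subset hz).2.2⟩
  -- the key pointwise identity : on Delta1, g is 1 / products
  have hgid : ∀ z ∈ Delta1, ∀ u : ℝ, 0 < u →
      (2 * u)⁻¹ * g z = 1 / (2 * z.1 ^ ((1:ℝ)/2) * (1 - z.1) ^ ((1:ℝ)/2) * u *
        z.2 ^ ((3:ℝ)/4) * (1 - z.2) ^ ((1:ℝ)/2)) := by
    intro z hz u hu
    obtain ⟨hx0, hx1, hp0, hp1⟩ := hmem z hz
    have ha : (0:ℝ) < z.1 ^ ((1:ℝ)/2) := Real.rpow_pos_of_pos hx0 _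
    have hb : (0:ℝ) < (1 - z.1) ^ ((1:ℝ)/2) := Real.rpow_pos_of_pos (by linarith) _
    have hc : (0:ℝ) < z.2 ^ ((3:ℝ)/4) := Real.rpow_pos_of_pos hp0 _
    have hd : (0:ℝ) < (1 - z.2) ^ ((1:ℝ)/2) := Real.rpow_pos_of_pos (by linarith) _
    rw [hgdef]
    simp only
    rw [show (-(1:ℝ)/2) = -((1:ℝ)/2) by norm_num, show (-(3:ℝ)/4) = -((3:ℝ)/4) by norm_num,
      Real.rpow_neg hx0.le, Real.rpow_neg (by linarith : (0:ℝ) ≤ 1 - z.1),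
      Real.rpow_neg hp0.le, Real.rpow_neg (by linarith : (0:ℝ) ≤ 1 - z.2)]
    field_simp
  -- denominators are positive
  have hden : ∀ z ∈ Delta1, ∀ u : ℝ, 0 < u →
      0 < 2 * z.1 ^ ((1:ℝ)/2) * (1 - z.1) ^ ((1:ℝ)/2) * u *
        z.2 ^ ((3:ℝ)/4) * (1 - z.2) ^ ((1:ℝ)/2) := by
    intro z hz u hu
    obtain ⟨hx0, hx1, hp0, hp1⟩ := hmem z hz
    have ha : (0:ℝ) < z.1 ^ ((1:ℝ)/2) := Real.rpow_pos_of_pos hx0 _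
    have hb : (0:ℝ) < (1 - z.1) ^ ((1:ℝ)/2) := Real.rpow_pos_of_pos (by linarith) _
    have hc : (0:ℝ) < z.2 ^ ((3:ℝ)/4) := Real.rpow_pos_of_pos hp0 _
    have hd : (0:ℝ) < (1 - z.2) ^ ((1:ℝ)/2) := Real.rpow_pos_of_pos (by linarith) _
    exact mul_pos (mul_pos (mul_pos (mul_pos (mul_pos two_pos ha) hb) hu) hc) hd
  -- comparison against the integrable function g
  have hcomp : ∀ z ∈ Delta1, ∀ u w : ℝ, 0 < w → w ≤ u →
      1 / (2 * z.1 ^ ((1:ℝ)/2) * (1 - z.1) ^ ((1:ℝ)/2) * u *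
        z.2 ^ ((3:ℝ)/4) * (1 - z.2) ^ ((1:ℝ)/2)) ≤ (2 * w)⁻¹ * g z := by
    intro z hz u w hw hwu
    rw [hgid z hz w hw]
    refine one_div_le_one_div_of_le (hden z hz w hw) ?_
    obtain ⟨hx0, hx1, hp0, hp1⟩ := hmem z hz
    have ha : (0:ℝ) < z.1 ^ ((1:ℝ)/2) := Real.rpow_pos_of_pos hx0 _
    have hb : (0:ℝ) < (1 - z.1) ^ ((1:ℝ)/2) := Real.rpow_pos_of_pos (by linarith) _
    have hc : (0:ℝ) < z.2 ^ ((3:ℝ)/4) := Real.rpow_pos_of_pos hp0 _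
    have hd : (0:ℝ) < (1 - z.2) ^ ((1:ℝ)/2) := Real.rpow_pos_of_pos (by linarith) _
    have h0 : (0:ℝ) ≤ 2 * z.1 ^ ((1:ℝ)/2) * (1 - z.1) ^ ((1:ℝ)/2) *
        z.2 ^ ((3:ℝ)/4) * (1 - z.2) ^ ((1:ℝ)/2) := by positivity
    calc 2 * z.1 ^ ((1:ℝ)/2) * (1 - z.1) ^ ((1:ℝ)/2) * w *
        z.2 ^ ((3:ℝ)/4) * (1 - z.2) ^ ((1:ℝ)/2)
        = (2 * z.1 ^ ((1:ℝ)/2) * (1 - z.1) ^ ((1:ℝ)/2) *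
            z.2 ^ ((3:ℝ)/4) * (1 - z.2) ^ ((1:ℝ)/2)) * w := by ring
      _ ≤ (2 * z.1 ^ ((1:ℝ)/2) * (1 - z.1) ^ ((1:ℝ)/2) *
            z.2 ^ ((3:ℝ)/4) * (1 - z.2) ^ ((1:ℝ)/2)) * u := mul_le_mul_of_nonneg_left hwu h0
      _ = 2 * z.1 ^ ((1:ℝ)/2) * (1 - z.1) ^ ((1:ℝ)/2) * u *
            z.2 ^ ((3:ℝ)/4) * (1 - z.2) ^ ((1:ℝ)/2) := by ring
  -- measurability
  have hFmeas : ∀ s : ℝ, AEStronglyMeasurable (fun z : ℝ × ℝ =>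
      1 / (2 * z.1 ^ ((1:ℝ)/2) * (1 - z.1) ^ ((1:ℝ)/2) * (z.1 + 2 * s) ^ ((1:ℝ)/2) *
        z.2 ^ ((3:ℝ)/4) * (1 - z.2) ^ ((1:ℝ)/2))) (volume.restrict Delta1) := by
    intro s
    exact (Measurable.aestronglyMeasurable (by fun_prop))
  have hF'meas : AEStronglyMeasurable (fun z : ℝ × ℝ =>
      -1 / (2 * z.1 ^ ((1:ℝ)/2) * (1 - z.1) ^ ((1:ℝ)/2) * (z.1 + 2 * t) ^ ((3:ℝ)/2) *
        z.2 ^ ((3:ℝ)/4) * (1 - z.2) ^ ((1:ℝ)/2))) (volume.restrict Delta1) :=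
    Measurable.aestronglyMeasurable (by fun_prop)
  -- integrability at t
  have hFint : Integrable (fun z : ℝ × ℝ =>
      1 / (2 * z.1 ^ ((1:ℝ)/2) * (1 - z.1) ^ ((1:ℝ)/2) * (z.1 + 2 * t) ^ ((1:ℝ)/2) *
        z.2 ^ ((3:ℝ)/4) * (1 - z.2) ^ ((1:ℝ)/2))) (volume.restrict Delta1) := by
    refine Integrable.mono' (hg.const_mul ((2 * t ^ ((1:ℝ)/2))⁻¹)) (hFmeas t) ?_
    refine (ae_restrict_iff' measurableSet_Delta1).2 (.of_forall fun z hz => ?_)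
    obtain ⟨hx0, hx1, hp0, hp1⟩ := hmem z hz
    have hu : (0:ℝ) < (z.1 + 2 * t) ^ ((1:ℝ)/2) := Real.rpow_pos_of_pos (by linarith) _
    rw [Real.norm_eq_abs, abs_of_pos (one_div_pos.2 (hden z hz _ hu))]
    refine hcomp z hz _ _ (Real.rpow_pos_of_pos ht _) ?_
    exact Real.rpow_le_rpow ht.le (by linarith) (by norm_num)
  -- the uniform bound on the ball
  have hbound : ∀ᵐ z ∂(volume.restrict Delta1), ∀ s ∈ Metric.ball t (t/2),
      ‖-1 / (2 * z.1 ^ ((1:ℝ)/2) * (1 - z.1) ^ ((1:ℝ)/2) * (z.1 + 2 * s) ^ ((3:ℝ)/2) *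
        z.2 ^ ((3:ℝ)/4) * (1 - z.2) ^ ((1:ℝ)/2))‖ ≤ (2 * t ^ ((3:ℝ)/2))⁻¹ * g z := by
    refine (ae_restrict_iff' measurableSet_Delta1).2 (.of_forall fun z hz s hs => ?_)
    obtain ⟨hx0, hx1, hp0, hp1⟩ := hmem z hz
    have hst : t / 2 < s := by
      rw [Metric.mem_ball, Real.dist_eq, abs_lt] at hs; linarith [hs.1]
    have hu : (0:ℝ) < (z.1 + 2 * s) ^ ((3:ℝ)/2) := Real.rpow_pos_of_pos (by linarith) _
    rw [neg_div, norm_neg, Real.norm_eq_abs, abs_of_pos (one_div_pos.2 (hden z hz _ hu))]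
    refine hcomp z hz _ _ (Real.rpow_pos_of_pos ht _) ?_
    exact Real.rpow_le_rpow ht.le (by linarith) (by norm_num)
  -- differentiability in s, pointwise
  have hdiff : ∀ᵐ z ∂(volume.restrict Delta1), ∀ s ∈ Metric.ball t (t/2),
      HasDerivAt (fun s' : ℝ =>
        1 / (2 * z.1 ^ ((1:ℝ)/2) * (1 - z.1) ^ ((1:ℝ)/2) * (z.1 + 2 * s') ^ ((1:ℝ)/2) *
          z.2 ^ ((3:ℝ)/4) * (1 - z.2) ^ ((1:ℝ)/2)))
        (-1 / (2 * z.1 ^ ((1:ℝ)/2) * (1 - z.1) ^ ((1:ℝ)/2) * (z.1 + 2 * s) ^ ((3:ℝ)/2) *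
          z.2 ^ ((3:ℝ)/4) * (1 - z.2) ^ ((1:ℝ)/2))) s := by
    refine (ae_restrict_iff' measurableSet_Delta1).2 (.of_forall fun z hz s hs => ?_)
    obtain ⟨hx0, hx1, hp0, hp1⟩ := hmem z hz
    have hst : t / 2 < s := by
      rw [Metric.mem_ball, Real.dist_eq, abs_lt] at hs; linarith [hs.1]
    have hxs : (0:ℝ) < z.1 + 2 * s := by linarith
    have ha : (0:ℝ) < z.1 ^ ((1:ℝ)/2) := Real.rpow_pos_of_pos hx0 _
    have hb : (0:ℝ) < (1 - z.1) ^ ((1:ℝ)/2) := Real.rpow_pos_of_pos (by linarith) _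
    have hc : (0:ℝ) < z.2 ^ ((3:ℝ)/4) := Real.rpow_pos_of_pos hp0 _
    have hd : (0:ℝ) < (1 - z.2) ^ ((1:ℝ)/2) := Real.rpow_pos_of_pos (by linarith) _
    set K : ℝ := 1 / (2 * z.1 ^ ((1:ℝ)/2) * (1 - z.1) ^ ((1:ℝ)/2) *
      z.2 ^ ((3:ℝ)/4) * (1 - z.2) ^ ((1:ℝ)/2)) with hK
    have hform : ∀ s' : ℝ, 0 < z.1 + 2 * s' →
        1 / (2 * z.1 ^ ((1:ℝ)/2) * (1 - z.1) ^ ((1:ℝ)/2) * (z.1 + 2 * s') ^ ((1:ℝ)/2) *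
          z.2 ^ ((3:ℝ)/4) * (1 - z.2) ^ ((1:ℝ)/2)) = K * (z.1 + 2 * s') ^ (-((1:ℝ)/2)) := by
      intro s' h
      have hu : (0:ℝ) < (z.1 + 2 * s') ^ ((1:ℝ)/2) := Real.rpow_pos_of_pos h _
      rw [Real.rpow_neg h.le, hK]
      field_simp
    have hd1 : HasDerivAt (fun s' : ℝ => z.1 + 2 * s') 2 s := by
      simpa using ((hasDerivAt_id s).const_mul (2:ℝ)).const_add z.1
    have hd2 := hd1.rpow_const (p := -((1:ℝ)/2)) (Or.inl hxs.ne')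
    have hd3 := hd2.const_mul K
    have heq : (fun s' : ℝ =>
        1 / (2 * z.1 ^ ((1:ℝ)/2) * (1 - z.1) ^ ((1:ℝ)/2) * (z.1 + 2 * s') ^ ((1:ℝ)/2) *
          z.2 ^ ((3:ℝ)/4) * (1 - z.2) ^ ((1:ℝ)/2)))
        =ᶠ[nhds s] fun s' => K * (z.1 + 2 * s') ^ (-((1:ℝ)/2)) := by
      have hopen : IsOpen {s' : ℝ | 0 < z.1 + 2 * s'} :=
        isOpen_lt continuous_const (continuous_const.add (continuous_const.mul continuous_id))
      filter_upwards [hopen.mem_nhds hxs] with s' h using hform s' h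
    have hfin := hd3.congr_of_eventuallyEq heq
    refine hfin.congr_deriv ?_
    have hu : (0:ℝ) < (z.1 + 2 * s) ^ ((3:ℝ)/2) := Real.rpow_pos_of_pos hxs _
    rw [show (-((1:ℝ)/2) - 1) = -((3:ℝ)/2) by norm_num, Real.rpow_neg hxs.le, hK]
    field_simp
  refine (hasDerivAt_integral_of_dominated_loc_of_deriv_le (s := Metric.ball t (t/2))
    (F' := fun s z => -1 / (2 * z.1 ^ ((1:ℝ)/2) * (1 - z.1) ^ ((1:ℝ)/2) *
      (z.1 + 2 * s) ^ ((3:ℝ)/2) * z.2 ^ ((3:ℝ)/4) * (1 - z.2) ^ ((1:ℝ)/2)))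
    (bound := fun z => (2 * t ^ ((3:ℝ)/2))⁻¹ * g z)
    (Metric.ball_mem_nhds t (by positivity)) (Filter.Eventually.of_forall hFmeas) hFint hF'meas ?_ ?_ ?_).2
  · exact hbound
  · exact hg.const_mul _
  · exact hdiff
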